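/- arXiv:0906.4010 — 4 statements merged into one kernel-verified Lean document; each statement's English description precedes it below -/
import Mathlib

section
/- For any bounded sequence x = {x_n} in a normed vector space V, the limit as n → ∞ of sup_j (1/n)‖∑_{i=0}^{n-1} x_{i+j}‖ exists. -/
open Filter Topology

/-- For any bounded sequence `x` in a normed vector space `V`, the limit as `n → ∞` of
`sup_j (1/n)‖∑_{i=0}^{n-1} x_{i+j}‖` exists. -/
theorem stmt_0 {V : Type*} [NormedAddCommGroup V] (x : ℕ → V)
    (hx : ∃ M : ℝ, ∀ n, ‖x n‖ ≤ M) :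
    ∃ l : ℝ, Tendsto
      (fun n : ℕ => ⨆ j : ℕ, ‖∑ i ∈ Finset.range n, x (i + j)‖ / (n : ℝ))
      atTop (𝓝 l) := by
  obtain ⟨M, hM⟩ := hx
  set M' := max M 0 with hM'
  have hM0 : 0 ≤ M' := le_max_right _ _
  have hMx : ∀ n, ‖x n‖ ≤ M' := fun n => (hM n).trans (le_max_left _ _)
  have hbd : ∀ n j, ‖∑ i ∈ Finset.range n, x (i + j)‖ ≤ n * M' := by
    intro n j
    calc ‖∑ i ∈ Finset.range n, x (i + j)‖ ≤ ∑ i ∈ Finset.range n, ‖x (i + j)‖ :=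
          norm_sum_le _ _
      _ ≤ ∑ _i ∈ Finset.range n, M' := Finset.sum_le_sum fun i _ => hMx _
      _ = n * M' := by simp [mul_comm]
  set a : ℕ → ℝ := fun n => ⨆ j : ℕ, ‖∑ i ∈ Finset.range n, x (i + j)‖ with ha
  have hbdd : ∀ n, BddAbove (Set.range fun j : ℕ => ‖∑ i ∈ Finset.range n, x (i + j)‖) := by
    intro n
    exact ⟨n * M', by rintro _ ⟨j, rfl⟩; exact hbd n j⟩
  have ha_nonneg : ∀ n, 0 ≤ a n := by
    intro n
    exact le_trans (norm_nonneg _) (le_ciSup (hbdd n) 0)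
  have hsub : Subadditive a := by
    intro m n
    apply ciSup_le
    intro j
    rw [Finset.sum_range_add]
    calc ‖(∑ i ∈ Finset.range m, x (i + j)) + ∑ i ∈ Finset.range n, x (m + i + j)‖
        ≤ ‖∑ i ∈ Finset.range m, x (i + j)‖ + ‖∑ i ∈ Finset.range n, x (m + i + j)‖ :=
          norm_add_le _ _
      _ ≤ a m + a n := by
          apply add_le_add
          · exact le_ciSup (hbdd m) j
          · have : (∑ i ∈ Finset.range n, x (m + i + j)) =
                ∑ i ∈ Finset.range n, x (i + (m + j)) := by
              apply Finset.sum_congr rfl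
              intro i _
              congr 1
              omega
            rw [this]
            exact le_ciSup (hbdd n) (m + j)
  have hblow : BddBelow (Set.range fun n : ℕ => a n / n) := by
    refine ⟨0, ?_⟩
    rintro _ ⟨n, rfl⟩
    exact div_nonneg (ha_nonneg n) (Nat.cast_nonneg n)
  refine ⟨hsub.lim, ?_⟩
  have h1 := hsub.tendsto_lim hblow
  apply h1.congr'
  filter_upwards [eventually_gt_atTop 0] with n hn
  have hn' : (0:ℝ) < n := by exact_mod_cast hn
  rw [div_eq_mul_inv, mul_comm, Real.mul_iSup_of_nonneg (by positivity)]
  exact iSup_congr fun j => by rw [mul_comm, ← div_eq_mul_inv]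
end

section
/- A bounded linear functional L on ℓ^∞(V) with ‖L‖ ≤ 1 is shift-invariant (L ∘ T = L) if and only if |L(x)| ≤ p(x) for all x ∈ ℓ^∞(V). -/
open Filter Topology BoundedContinuousFunction

/-- The left shift operator on `ℓ^∞(V)`, realized as bounded continuous functions `ℕ →ᵇ V`. -/
noncomputable def leftShift {V : Type*} [NormedAddCommGroup V] (x : ℕ →ᵇ V) : ℕ →ᵇ V :=
  BoundedContinuousFunction.ofNormedAddCommGroup (fun n => x (n + 1))
    (continuous_of_discreteTopology) ‖x‖ (fun n => x.norm_coe_le_norm (n + 1))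

lemma leftShift_apply {V : Type*} [NormedAddCommGroup V] (x : ℕ →ᵇ V) (n : ℕ) :
    leftShift x n = x (n + 1) := rfl

lemma leftShift_iterate_apply {V : Type*} [NormedAddCommGroup V] (j : ℕ) (x : ℕ →ᵇ V) (k : ℕ) :
    (leftShift^[j] x) k = x (k + j) := by
  induction j generalizing x with
  | zero => simp
  | succ j ih =>
    rw [Function.iterate_succ_apply, ih, leftShift_apply]
    rfl

/-- A bounded linear functional `L` on `ℓ^∞(V)` with `‖L‖ ≤ 1` is shift-invariant
if and only if `|L(x)| ≤ p(x)` for all `x`. -/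
theorem stmt_10 {V : Type*} [NormedAddCommGroup V] [NormedSpace ℝ V]
    (p : (ℕ →ᵇ V) → ℝ)
    (hp : ∀ y : ℕ →ᵇ V,
      Tendsto (fun n : ℕ => ⨆ j : ℕ, ‖∑ i ∈ Finset.range n, y (i + j)‖ / (n : ℝ))
        atTop (𝓝 (p y)))
    (L : (ℕ →ᵇ V) →L[ℝ] ℝ) (hLnorm : ‖L‖ ≤ 1) :
    (∀ x : ℕ →ᵇ V, L (leftShift x) = L x) ↔ (∀ x : ℕ →ᵇ V, |L x| ≤ p x) := by
  constructor
  · intro hL x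
    have hiter : ∀ (j : ℕ) (z : ℕ →ᵇ V), L (leftShift^[j] z) = L z := by
      intro j
      induction j with
      | zero => intro z; simp
      | succ j ih =>
        intro z
        rw [Function.iterate_succ_apply, ih, hL]
    refine ge_of_tendsto (hp x) ?_
    filter_upwards [eventually_ge_atTop 1] with n hn
    set y : ℕ →ᵇ V := (n : ℝ)⁻¹ • ∑ j ∈ Finset.range n, leftShift^[j] x with hy
    have hn0 : (n : ℝ) ≠ 0 := by positivity
    have hLy : L y = L x := by
      rw [hy, map_smul, map_sum]
      have : ∀ j ∈ Finset.range n, L (leftShift^[j] x) = L x := fun j _ => hiter j x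
      rw [Finset.sum_congr rfl this, Finset.sum_const, Finset.card_range]
      simp [smul_eq_mul]
      field_simp
    -- bound each coordinate of y
    have hbdd : BddAbove (Set.range fun j : ℕ => ‖∑ i ∈ Finset.range n, x (i + j)‖ / (n : ℝ)) := by
      refine ⟨‖x‖, ?_⟩
      rintro r ⟨j, rfl⟩
      rw [div_le_iff₀ (by positivity)]
      calc ‖∑ i ∈ Finset.range n, x (i + j)‖ ≤ ∑ i ∈ Finset.range n, ‖x (i + j)‖ :=
            norm_sum_le _ _
        _ ≤ ∑ _i ∈ Finset.range n, ‖x‖ :=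
            Finset.sum_le_sum fun i _ => x.norm_coe_le_norm _
        _ = ‖x‖ * n := by simp [mul_comm]
    have hSnonneg : 0 ≤ ⨆ j : ℕ, ‖∑ i ∈ Finset.range n, x (i + j)‖ / (n : ℝ) :=
      Real.iSup_nonneg fun j => by positivity
    have hynorm : ‖y‖ ≤ ⨆ j : ℕ, ‖∑ i ∈ Finset.range n, x (i + j)‖ / (n : ℝ) := by
      refine (BoundedContinuousFunction.norm_le hSnonneg).2 fun k => ?_
      have hyk : y k = (n : ℝ)⁻¹ • ∑ i ∈ Finset.range n, x (i + k) := by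
        rw [hy]
        simp only [BoundedContinuousFunction.coe_smul, Pi.smul_apply,
          BoundedContinuousFunction.coe_sum, Finset.sum_apply]
        congr 1
        refine Finset.sum_congr rfl fun j _ => ?_
        rw [leftShift_iterate_apply, Nat.add_comm]
      rw [hyk, norm_smul, Real.norm_eq_abs, abs_inv, Nat.abs_cast, inv_mul_eq_div]
      exact le_ciSup hbdd k
    calc |L x| = |L y| := by rw [hLy]
      _ ≤ ‖L‖ * ‖y‖ := L.le_opNorm y
      _ ≤ 1 * ‖y‖ := by
          have := norm_nonneg y
          nlinarith [norm_nonneg y]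
      _ = ‖y‖ := one_mul _
      _ ≤ _ := hynorm
  · intro h x
    set y : ℕ →ᵇ V := leftShift x - x with hy
    have hsum : ∀ n j : ℕ, ∑ i ∈ Finset.range n, y (i + j) = x (n + j) - x j := by
      intro n j
      have : ∀ i ∈ Finset.range n, y (i + j) = x (i + 1 + j) - x (i + j) := by
        intro i _
        rw [hy]
        simp [leftShift_apply]
        congr 1
        omega
      rw [Finset.sum_congr rfl this]
      have := Finset.sum_range_sub (fun i => x (i + j)) n
      simpa using this
    have hty : Tendsto (fun n : ℕ => ⨆ j : ℕ, ‖∑ i ∈ Finset.range n, y (i + j)‖ / (n : ℝ))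
        atTop (𝓝 0) := by
      have hle : ∀ n : ℕ, (⨆ j : ℕ, ‖∑ i ∈ Finset.range n, y (i + j)‖ / (n : ℝ)) ≤
          (2 * ‖x‖) / n := by
        intro n
        refine Real.iSup_le (fun j => ?_) (by positivity)
        rw [hsum n j]
        gcongr
        calc ‖x (n + j) - x j‖ ≤ ‖x (n + j)‖ + ‖x j‖ := norm_sub_le _ _
          _ ≤ ‖x‖ + ‖x‖ := add_le_add (x.norm_coe_le_norm _) (x.norm_coe_le_norm _)
          _ = 2 * ‖x‖ := by ring
      have hge : ∀ n : ℕ, 0 ≤ ⨆ j : ℕ, ‖∑ i ∈ Finset.range n, y (i + j)‖ / (n : ℝ) :=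
        fun n => Real.iSup_nonneg fun j => by positivity
      exact squeeze_zero hge hle (tendsto_const_div_atTop_nhds_zero_nat _)
    have hpy : p y = 0 := tendsto_nhds_unique (hp y) hty
    have : |L y| ≤ 0 := hpy ▸ h y
    have hLy : L y = 0 := abs_eq_zero.mp (le_antisymm this (abs_nonneg _))
    have : L (leftShift x) - L x = 0 := by
      rw [← map_sub]; exact hLy
    linarith
end

section
/- For every bounded sequence x in a normed space V, there exists a Banach limit functional L₀ on ℓ^∞(V) with L₀(x) = p(x). -/
open Filter Topology BoundedContinuousFunction

set_option linter.unusedSectionVars false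

section Aux

variable {V : Type*} [NormedAddCommGroup V] [NormedSpace ℝ V]

/-- The pre-limit functional. -/
noncomputable def preF (y : ℕ →ᵇ V) (n : ℕ) : ℝ :=
  ⨆ j : ℕ, ‖∑ i ∈ Finset.range n, y (i + j)‖ / (n : ℝ)

lemma preF_term_le (y : ℕ →ᵇ V) (n j : ℕ) :
    ‖∑ i ∈ Finset.range n, y (i + j)‖ / (n : ℝ) ≤ ‖y‖ := by
  rcases Nat.eq_zero_or_pos n with h | h
  · simp [h, norm_nonneg]
  · rw [div_le_iff₀ (by positivity)]
    calc ‖∑ i ∈ Finset.range n, y (i + j)‖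
        ≤ ∑ i ∈ Finset.range n, ‖y (i + j)‖ := norm_sum_le _ _
      _ ≤ ∑ _i ∈ Finset.range n, ‖y‖ :=
          Finset.sum_le_sum fun i _ => y.norm_coe_le_norm _
      _ = ‖y‖ * n := by simp [mul_comm]

lemma preF_bdd (y : ℕ →ᵇ V) (n : ℕ) :
    BddAbove (Set.range fun j : ℕ => ‖∑ i ∈ Finset.range n, y (i + j)‖ / (n : ℝ)) :=
  ⟨‖y‖, by rintro _ ⟨j, rfl⟩; exact preF_term_le y n j⟩

lemma preF_le_norm (y : ℕ →ᵇ V) (n : ℕ) : preF y n ≤ ‖y‖ :=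
  ciSup_le fun j => preF_term_le y n j

lemma preF_nonneg (y : ℕ →ᵇ V) (n : ℕ) : 0 ≤ preF y n :=
  le_trans (by positivity) (le_ciSup (preF_bdd y n) 0)

lemma preF_add_le (y z : ℕ →ᵇ V) (n : ℕ) :
    preF (y + z) n ≤ preF y n + preF z n := by
  refine ciSup_le fun j => ?_
  calc ‖∑ i ∈ Finset.range n, (y + z) (i + j)‖ / (n : ℝ)
      ≤ (‖∑ i ∈ Finset.range n, y (i + j)‖ + ‖∑ i ∈ Finset.range n, z (i + j)‖) / (n : ℝ) := by
        rcases Nat.eq_zero_or_pos n with h | h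
        · simp [h]
        · apply div_le_div_of_nonneg_right ?_ (by positivity)
          simp only [BoundedContinuousFunction.coe_add, Pi.add_apply,
            Finset.sum_add_distrib]
          exact norm_add_le _ _
    _ = ‖∑ i ∈ Finset.range n, y (i + j)‖ / (n : ℝ)
        + ‖∑ i ∈ Finset.range n, z (i + j)‖ / (n : ℝ) := add_div _ _ _
    _ ≤ preF y n + preF z n :=
        add_le_add (le_ciSup (preF_bdd y n) j) (le_ciSup (preF_bdd z n) j)

lemma preF_smul (c : ℝ) (hc : 0 ≤ c) (y : ℕ →ᵇ V) (n : ℕ) :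
    preF (c • y) n = c * preF y n := by
  unfold preF
  rw [Real.mul_iSup_of_nonneg hc]
  congr 1
  funext j
  have : ∑ i ∈ Finset.range n, (c • y) (i + j) = c • ∑ i ∈ Finset.range n, y (i + j) := by
    simp [Finset.smul_sum]
  rw [this, norm_smul, Real.norm_eq_abs, abs_of_nonneg hc, mul_div_assoc]

lemma preF_neg (y : ℕ →ᵇ V) (n : ℕ) : preF (-y) n = preF y n := by
  unfold preF
  congr 1
  funext j
  have : ∑ i ∈ Finset.range n, (-y) (i + j) = -∑ i ∈ Finset.range n, y (i + j) := by
    simp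
  rw [this, norm_neg]

lemma preF_shift_le (y : ℕ →ᵇ V) (n : ℕ) :
    preF (leftShift y - y) n ≤ 2 * ‖y‖ / (n : ℝ) := by
  refine ciSup_le fun j => ?_
  rcases Nat.eq_zero_or_pos n with h | h
  · simp [h]
  apply div_le_div_of_nonneg_right ?_ (by positivity)
  have hsum : ∑ i ∈ Finset.range n, (leftShift y - y) (i + j)
      = y (n + j) - y (0 + j) := by
    have : ∀ i, (leftShift y - y) (i + j) = y ((i + 1) + j) - y (i + j) := by
      intro i
      simp only [BoundedContinuousFunction.coe_sub, Pi.sub_apply, leftShift,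
        BoundedContinuousFunction.coe_ofNormedAddCommGroup]
      congr 2
      omega
    rw [Finset.sum_congr rfl fun i _ => this i]
    exact Finset.sum_range_sub (fun k => y (k + j)) n
  rw [hsum]
  calc ‖y (n + j) - y (0 + j)‖ ≤ ‖y (n + j)‖ + ‖y (0 + j)‖ := norm_sub_le _ _
    _ ≤ ‖y‖ + ‖y‖ := add_le_add (y.norm_coe_le_norm _) (y.norm_coe_le_norm _)
    _ = 2 * ‖y‖ := by ring

end Aux

/-- For every bounded sequence `x` in a normed space `V`, there exists a Banach limit
functional `L₀` on `ℓ^∞(V)` with `L₀(x) = p(x)`. -/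
theorem stmt_13 {V : Type*} [NormedAddCommGroup V] [NormedSpace ℝ V]
    (p : (ℕ →ᵇ V) → ℝ)
    (hp : ∀ y : ℕ →ᵇ V,
      Tendsto (fun n : ℕ => ⨆ j : ℕ, ‖∑ i ∈ Finset.range n, y (i + j)‖ / (n : ℝ))
        atTop (𝓝 (p y)))
    (x : ℕ →ᵇ V) :
    ∃ L : (ℕ →ᵇ V) →L[ℝ] ℝ, ‖L‖ ≤ 1 ∧ (∀ y : ℕ →ᵇ V, L (leftShift y) = L y) ∧
      L x = p x := by
  have hp' : ∀ y : ℕ →ᵇ V, Tendsto (preF y) atTop (𝓝 (p y)) := hp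
  -- basic properties of p
  have p_le_norm : ∀ y : ℕ →ᵇ V, p y ≤ ‖y‖ := fun y =>
    le_of_tendsto (hp' y) (Eventually.of_forall fun n => preF_le_norm y n)
  have p_nonneg : ∀ y : ℕ →ᵇ V, 0 ≤ p y := fun y =>
    ge_of_tendsto (hp' y) (Eventually.of_forall fun n => preF_nonneg y n)
  have p_add : ∀ y z : ℕ →ᵇ V, p (y + z) ≤ p y + p z := fun y z =>
    le_of_tendsto_of_tendsto' (hp' (y + z)) ((hp' y).add (hp' z))
      fun n => preF_add_le y z n
  have p_smul : ∀ c : ℝ, 0 < c → ∀ y : ℕ →ᵇ V, p (c • y) = c * p y := by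
    intro c hc y
    refine tendsto_nhds_unique (hp' (c • y)) ?_
    have heq : preF (c • y) = fun n => c * preF y n :=
      funext fun n => preF_smul c hc.le y n
    rw [heq]
    exact (hp' y).const_mul c
  have p_neg : ∀ y : ℕ →ᵇ V, p (-y) = p y := by
    intro y
    refine tendsto_nhds_unique (hp' (-y)) ?_
    have heq : preF (-y) = preF y := funext fun n => preF_neg y n
    rw [heq]
    exact hp' y
  have p_zero : p 0 = 0 := by
    refine tendsto_nhds_unique (hp' 0) ?_
    have : preF (0 : ℕ →ᵇ V) = fun _ => (0 : ℝ) := by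
      funext n
      exact le_antisymm (by simpa using preF_le_norm (0 : ℕ →ᵇ V) n) (preF_nonneg (0 : ℕ →ᵇ V) n)
    rw [this]; exact tendsto_const_nhds
  have p_shift : ∀ y : ℕ →ᵇ V, p (leftShift y - y) = 0 := by
    intro y
    refine tendsto_nhds_unique (hp' _) ?_
    have h1 : Tendsto (fun n : ℕ => 2 * ‖y‖ / (n : ℝ)) atTop (𝓝 0) :=
      tendsto_const_nhds.div_atTop tendsto_natCast_atTop_atTop
    exact squeeze_zero (fun n => preF_nonneg _ n) (fun n => preF_shift_le y n) h1
  have p_shift' : ∀ y : ℕ →ᵇ V, p (y - leftShift y) = 0 := by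
    intro y
    have : y - leftShift y = -(leftShift y - y) := by abel
    rw [this, p_neg, p_shift]
  -- from a dominated linear functional, build the continuous one
  have key : ∀ (g : (ℕ →ᵇ V) →ₗ[ℝ] ℝ), (∀ y, g y ≤ p y) → g x = p x →
      ∃ L : (ℕ →ᵇ V) →L[ℝ] ℝ, ‖L‖ ≤ 1 ∧ (∀ y : ℕ →ᵇ V, L (leftShift y) = L y) ∧
        L x = p x := by
    intro g hg hgx
    have habs : ∀ y, |g y| ≤ ‖y‖ := by
      intro y
      rw [abs_le]
      refine ⟨?_, (hg y).trans (p_le_norm y)⟩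
      have h := (hg (-y)).trans (p_le_norm (-y))
      rw [map_neg, norm_neg] at h
      linarith
    refine ⟨g.mkContinuous 1 (fun y => by simpa using habs y), ?_, ?_, ?_⟩
    · exact g.mkContinuous_norm_le (by norm_num) _
    · intro y
      have h1 : g (leftShift y) - g y ≤ 0 := by
        have := (hg (leftShift y - y)).trans_eq (p_shift y)
        rwa [map_sub] at this
      have h2 : g y - g (leftShift y) ≤ 0 := by
        have := (hg (y - leftShift y)).trans_eq (p_shift' y)
        rwa [map_sub] at this
      simp only [LinearMap.mkContinuous_apply]
      linarith
    · simpa using hgx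
  by_cases hx : x = 0
  · subst hx
    refine key 0 (fun y => by simpa using p_nonneg y) ?_
    simp [p_zero]
  · -- define the partial functional on the span of x
    have H : ∀ c : ℝ, c • x = 0 → c • (p x) = 0 := fun c hc =>
      (smul_eq_zero.1 hc).elim (fun hc0 => by rw [hc0, zero_smul])
        (fun hx0 => absurd hx0 hx)
    set f : (ℕ →ᵇ V) →ₗ.[ℝ] ℝ := LinearPMap.mkSpanSingleton' x (p x) H with hf
    have hdom : ∀ z : f.domain, f z ≤ p z := by
      rintro ⟨z, hz⟩
      have hz' : z ∈ Submodule.span ℝ {x} := hz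
      rw [Submodule.mem_span_singleton] at hz'
      obtain ⟨c, rfl⟩ := hz'
      have hval : f ⟨c • x, hz⟩ = c • (p x) :=
        LinearPMap.mkSpanSingleton'_apply x (p x) H c hz
      rw [hval, smul_eq_mul]
      rcases lt_trichotomy c 0 with h | h | h
      · have h1 : c * p x ≤ 0 := mul_nonpos_of_nonpos_of_nonneg h.le (p_nonneg x)
        exact h1.trans (p_nonneg _)
      · subst h; simp [p_nonneg]
      · rw [p_smul c h x]
    obtain ⟨g, hg1, hg2⟩ := exists_extension_of_le_sublinear f p p_smul p_add hdom
    refine key g hg2 ?_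
    have hmem : x ∈ f.domain := Submodule.mem_span_singleton_self x
    have hx' : g x = f ⟨x, hmem⟩ := hg1 ⟨x, hmem⟩
    rw [hx']
    exact LinearPMap.mkSpanSingleton'_apply_self x (p x) H hmem
end

section
/- A bounded sequence x in a normed space V is strongly almost convergent to v (i.e., L(x) = L(ṽ) for all Banach limit functionals L) if and only if p(x − ṽ) = 0. -/
open Filter Topology BoundedContinuousFunction

namespace Stmt14Aux
set_option linter.unusedSectionVars false

variable {V : Type*} [NormedAddCommGroup V] [NormedSpace ℝ V]

lemma leftShift_apply (z : ℕ →ᵇ V) (n : ℕ) : leftShift z n = z (n + 1) := rfl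

lemma iter_apply (z : ℕ →ᵇ V) (k n : ℕ) : (leftShift^[k] z) n = z (n + k) := by
  induction k generalizing n with
  | zero => rfl
  | succ k ih =>
    rw [Function.iterate_succ_apply', leftShift_apply, ih]
    congr 1
    omega

noncomputable def S (y : ℕ →ᵇ V) (n : ℕ) : ℝ :=
  ⨆ j : ℕ, ‖∑ i ∈ Finset.range n, y (i + j)‖ / n

lemma term_le (y : ℕ →ᵇ V) (n j : ℕ) :
    ‖∑ i ∈ Finset.range n, y (i + j)‖ / n ≤ ‖y‖ := by
  rcases Nat.eq_zero_or_pos n with h | h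
  · simp [h]
  · rw [div_le_iff₀ (by positivity)]
    calc ‖∑ i ∈ Finset.range n, y (i + j)‖
        ≤ ∑ i ∈ Finset.range n, ‖y (i + j)‖ := norm_sum_le _ _
      _ ≤ ∑ _i ∈ Finset.range n, ‖y‖ :=
          Finset.sum_le_sum fun i _ => y.norm_coe_le_norm _
      _ = ‖y‖ * n := by simp [mul_comm]

lemma bdd (y : ℕ →ᵇ V) (n : ℕ) :
    BddAbove (Set.range fun j : ℕ => ‖∑ i ∈ Finset.range n, y (i + j)‖ / n) :=
  ⟨‖y‖, by rintro _ ⟨j, rfl⟩; exact term_le y n j⟩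

lemma S_nonneg (y : ℕ →ᵇ V) (n : ℕ) : 0 ≤ S y n :=
  le_ciSup_of_le (bdd y n) 0 (by positivity)

lemma S_le (y : ℕ →ᵇ V) (n : ℕ) : S y n ≤ ‖y‖ := ciSup_le (term_le y n)

lemma S_add_le (a b : ℕ →ᵇ V) (n : ℕ) : S (a + b) n ≤ S a n + S b n := by
  refine ciSup_le fun j => ?_
  have h1 : ‖∑ i ∈ Finset.range n, (a + b) (i + j)‖
      ≤ ‖∑ i ∈ Finset.range n, a (i + j)‖ + ‖∑ i ∈ Finset.range n, b (i + j)‖ := by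
    calc ‖∑ i ∈ Finset.range n, (a + b) (i + j)‖
        = ‖(∑ i ∈ Finset.range n, a (i + j)) + ∑ i ∈ Finset.range n, b (i + j)‖ := by
          rw [← Finset.sum_add_distrib]; simp
      _ ≤ _ := norm_add_le _ _
  calc ‖∑ i ∈ Finset.range n, (a + b) (i + j)‖ / n
      ≤ (‖∑ i ∈ Finset.range n, a (i + j)‖ + ‖∑ i ∈ Finset.range n, b (i + j)‖) / n := by
        rcases Nat.eq_zero_or_pos n with h | h
        · simp [h]
        · exact div_le_div_of_nonneg_right h1 (by positivity) |>.trans_eq rfl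
    _ = ‖∑ i ∈ Finset.range n, a (i + j)‖ / n + ‖∑ i ∈ Finset.range n, b (i + j)‖ / n :=
        add_div _ _ _
    _ ≤ S a n + S b n := add_le_add (le_ciSup (bdd a n) j) (le_ciSup (bdd b n) j)

lemma S_smul (c : ℝ) (hc : 0 ≤ c) (y : ℕ →ᵇ V) (n : ℕ) : S (c • y) n = c * S y n := by
  unfold S
  rw [Real.mul_iSup_of_nonneg hc]
  congr 1
  funext j
  have : ∑ i ∈ Finset.range n, (c • y) (i + j) = c • ∑ i ∈ Finset.range n, y (i + j) := by
    rw [Finset.smul_sum]; simp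
  rw [this, norm_smul, Real.norm_eq_abs, abs_of_nonneg hc, mul_div_assoc]


section WithP
variable (p : (ℕ →ᵇ V) → ℝ)
  (hp : ∀ y : ℕ →ᵇ V,
    Tendsto (fun n : ℕ => ⨆ j : ℕ, ‖∑ i ∈ Finset.range n, y (i + j)‖ / (n : ℝ))
      atTop (𝓝 (p y)))

lemma shift_telescope (z : ℕ →ᵇ V) (n j : ℕ) :
    ∑ i ∈ Finset.range n, (leftShift z - z) (i + j) = z (n + j) - z (0 + j) := by
  rw [← Finset.sum_range_sub (fun i => z (i + j)) n]
  refine Finset.sum_congr rfl fun i _ => ?_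
  have : (leftShift z - z) (i + j) = z (i + j + 1) - z (i + j) := by
    simp [leftShift_apply]
  rw [this]
  congr 2
  omega

include hp

lemma hpS (y : ℕ →ᵇ V) : Tendsto (S y) atTop (𝓝 (p y)) := hp y

lemma p_le_norm (y : ℕ →ᵇ V) : p y ≤ ‖y‖ :=
  le_of_tendsto (hpS p hp y) (Eventually.of_forall (S_le y))

lemma p_add_le (a b : ℕ →ᵇ V) : p (a + b) ≤ p a + p b :=
  le_of_tendsto_of_tendsto' (hpS p hp (a + b)) ((hpS p hp a).add (hpS p hp b)) (S_add_le a b)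

lemma p_smul (c : ℝ) (hc : 0 < c) (y : ℕ →ᵇ V) : p (c • y) = c * p y := by
  refine tendsto_nhds_unique (hpS p hp (c • y)) ?_
  have h2 := (hpS p hp y).const_mul c
  have heq : (fun k => c * S y k) = S (c • y) := funext fun n => (S_smul c hc.le y n).symm
  rwa [heq] at h2

lemma p_zero_of_bound (w : ℕ →ᵇ V) (C : ℝ)
    (h : ∀ n j : ℕ, ‖∑ i ∈ Finset.range n, w (i + j)‖ ≤ C) : p w = 0 := by
  refine tendsto_nhds_unique (hpS p hp w) ?_
  refine squeeze_zero' (Eventually.of_forall (S_nonneg w))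
    (Eventually.of_forall fun n => ?_) (tendsto_const_div_atTop_nhds_zero_nat C)
  refine ciSup_le fun j => ?_
  rcases Nat.eq_zero_or_pos n with hn | hn
  · simp [hn]
  · exact div_le_div_of_nonneg_right (h n j) (by positivity) |>.trans_eq rfl

lemma p_zero : p 0 = 0 := p_zero_of_bound p hp 0 0 (by simp)

lemma p_add_neg_nonneg (w : ℕ →ᵇ V) : 0 ≤ p w + p (-w) := by
  have h := p_add_le p hp w (-w)
  simpa [p_zero p hp] using h

lemma p_shift_sub (z : ℕ →ᵇ V) : p (leftShift z - z) = 0 := by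
  refine p_zero_of_bound p hp _ (2 * ‖z‖) fun n j => ?_
  rw [shift_telescope]
  calc ‖z (n + j) - z (0 + j)‖ ≤ ‖z (n + j)‖ + ‖z (0 + j)‖ := norm_sub_le _ _
    _ ≤ ‖z‖ + ‖z‖ := add_le_add (z.norm_coe_le_norm _) (z.norm_coe_le_norm _)
    _ = 2 * ‖z‖ := by ring

lemma p_sub_shift (z : ℕ →ᵇ V) : p (z - leftShift z) = 0 := by
  refine p_zero_of_bound p hp _ (2 * ‖z‖) fun n j => ?_
  have : ∑ i ∈ Finset.range n, (z - leftShift z) (i + j)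
      = -∑ i ∈ Finset.range n, (leftShift z - z) (i + j) := by
    rw [← Finset.sum_neg_distrib]
    refine Finset.sum_congr rfl fun i _ => ?_
    simp
  rw [this, norm_neg, shift_telescope]
  calc ‖z (n + j) - z (0 + j)‖ ≤ ‖z (n + j)‖ + ‖z (0 + j)‖ := norm_sub_le _ _
    _ ≤ ‖z‖ + ‖z‖ := add_le_add (z.norm_coe_le_norm _) (z.norm_coe_le_norm _)
    _ = 2 * ‖z‖ := by ring

end WithP
end Stmt14Aux

open Stmt14Aux

/-- A bounded sequence `x` is strongly almost convergent to `v` (i.e. `L(x) = L(ṽ)` for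
every Banach limit functional `L`) if and only if `p(x − ṽ) = 0`. -/
theorem stmt_14 {V : Type*} [NormedAddCommGroup V] [NormedSpace ℝ V]
    (p : (ℕ →ᵇ V) → ℝ)
    (hp : ∀ y : ℕ →ᵇ V,
      Tendsto (fun n : ℕ => ⨆ j : ℕ, ‖∑ i ∈ Finset.range n, y (i + j)‖ / (n : ℝ))
        atTop (𝓝 (p y)))
    (x : ℕ →ᵇ V) (v : V) :
    (∀ L : (ℕ →ᵇ V) →L[ℝ] ℝ, ‖L‖ ≤ 1 → (∀ y : ℕ →ᵇ V, L (leftShift y) = L y) →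
        L x = L (BoundedContinuousFunction.const ℕ v)) ↔
      p (x - BoundedContinuousFunction.const ℕ v) = 0 := by
  set y : ℕ →ᵇ V := x - BoundedContinuousFunction.const ℕ v with hy
  constructor
  · -- forward: construct a Banach limit functional via Hahn–Banach
    intro H
    by_cases hy0 : y = 0
    · rw [hy0]; exact p_zero p hp
    · have hdom : ∀ z : (LinearPMap.mkSpanSingleton (K := ℝ) (L := ℝ) (σ := RingHom.id ℝ) y (p y) hy0).domain,
          (LinearPMap.mkSpanSingleton (K := ℝ) (L := ℝ) (σ := RingHom.id ℝ) y (p y) hy0) z ≤ p z := by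
        rintro ⟨z, hz⟩
        rcases Submodule.mem_span_singleton.1 hz with ⟨c, rfl⟩
        rw [LinearPMap.mkSpanSingleton'_apply, RingHom.id_apply]
        rcases lt_trichotomy c 0 with hc | hc | hc
        · have h1 := p_add_neg_nonneg p hp y
          have h2 : p (c • y) = (-c) * p (-y) := by
            rw [show c • y = (-c) • (-y) by simp, p_smul p hp (-c) (by linarith)]
          rw [smul_eq_mul, h2]; nlinarith
        · simp [hc, p_zero p hp]
        · rw [p_smul p hp c hc, smul_eq_mul]
      obtain ⟨g, hg, hgle⟩ := exists_extension_of_le_sublinear _ p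
        (fun c hc z => p_smul p hp c hc z) (p_add_le p hp) hdom
      have hbound : ∀ z, ‖g z‖ ≤ 1 * ‖z‖ := by
        intro z
        rw [one_mul, Real.norm_eq_abs, abs_le]
        constructor
        · have h := (hgle (-z)).trans (p_le_norm p hp (-z))
          rw [map_neg, norm_neg] at h
          linarith
        · exact (hgle z).trans (p_le_norm p hp z)
      set L : (ℕ →ᵇ V) →L[ℝ] ℝ := LinearMap.mkContinuous g 1 hbound with hLdef
      have hLapp : ∀ z, L z = g z := fun z => rfl
      have hnorm : ‖L‖ ≤ 1 := LinearMap.mkContinuous_norm_le g zero_le_one hbound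
      have hshift : ∀ z, L (leftShift z) = L z := by
        intro z
        have h1 : g (leftShift z - z) ≤ 0 := (hgle _).trans_eq (p_shift_sub p hp z)
        have h2 : g (z - leftShift z) ≤ 0 := (hgle _).trans_eq (p_sub_shift p hp z)
        rw [map_sub] at h1 h2
        rw [hLapp, hLapp]
        linarith
      have hgy : g y = p y := by
        have h := hg ⟨y, Submodule.mem_span_singleton_self y⟩
        rw [h, LinearPMap.mkSpanSingleton_apply]
      have hx := H L hnorm hshift
      have hLy : L y = 0 := by
        rw [hy, map_sub, hx, sub_self]
      rw [← hgy, ← hLapp, hLy]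
  · -- backward: shift-invariance forces L to vanish on y
    intro hpy L hnorm hshift
    have hLiter : ∀ (k : ℕ) (z : ℕ →ᵇ V), L (leftShift^[k] z) = L z := by
      intro k
      induction k with
      | zero => intro z; rfl
      | succ k ih => intro z; rw [Function.iterate_succ_apply, ih, hshift]
    have key : ∀ n : ℕ, 1 ≤ n → |L y| ≤ S y n := by
      intro n hn
      have hn' : (0 : ℝ) < n := by exact_mod_cast hn
      set A : ℕ →ᵇ V := (n : ℝ)⁻¹ • ∑ i ∈ Finset.range n, leftShift^[i] y with hA
      have hLA : L A = L y := by
        rw [hA, map_smul, map_sum]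
        simp only [hLiter]
        rw [Finset.sum_const, Finset.card_range, nsmul_eq_mul, smul_eq_mul]
        field_simp
      have hnormA : ‖A‖ ≤ S y n := by
        refine (BoundedContinuousFunction.norm_le (S_nonneg y n)).2 fun k => ?_
        have hAk : A k = (n : ℝ)⁻¹ • ∑ i ∈ Finset.range n, y (i + k) := by
          rw [hA]
          simp only [BoundedContinuousFunction.coe_smul, Pi.smul_apply,
            BoundedContinuousFunction.coe_sum, Finset.sum_apply]
          congr 1
          refine Finset.sum_congr rfl fun i _ => ?_
          rw [iter_apply]
          congr 1
          omega
        rw [hAk, norm_smul, Real.norm_eq_abs, abs_of_pos (by positivity), inv_mul_eq_div]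
        exact le_ciSup (bdd y n) k
      calc |L y| = |L A| := by rw [hLA]
        _ = ‖L A‖ := (Real.norm_eq_abs _).symm
        _ ≤ ‖L‖ * ‖A‖ := L.le_opNorm A
        _ ≤ 1 * S y n := mul_le_mul hnorm hnormA (norm_nonneg _) zero_le_one
        _ = S y n := one_mul _
    have habs : |L y| ≤ p y :=
      ge_of_tendsto (hpS p hp y) (eventually_atTop.2 ⟨1, fun n hn => key n hn⟩)
    rw [hpy] at habs
    have hLy : L y = 0 := abs_eq_zero.1 (le_antisymm habs (abs_nonneg _))
    rw [hy, map_sub, sub_eq_zero] at hLy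
    exact hLy
end
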